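/- Determinant identity (non-regular Ihara-type formula): for a finite graph G with degrees ≥ 2 and z ∈ ℂ∖ℝ, ∏_{e∈E}(−G^z(e)) · det((ζ^z)^{−1}I^{|B|} − B) = det(zI^{|V|} − A) · ∏_{x∈V}(−G^z(x)), where B is the non-backtracking adjacency operator on ℂ^B, ζ^z acts as multiplication by e ↦ ζ^z(o(e),t(e)), G^z(x) = G(x̃,x̃;z) and G^z(e) = G(w̃,ṽ;z) for e = (w,v) (invariant under edge reversal), with Green functions taken on the universal covering tree. -/

import Mathlib

open Finset Matrix

/-- The non-backtracking adjacency matrix: `Bmat e e' = 1` iff `e' ⇝ e`,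
i.e. `t(e') = o(e)` and `e` is not the reverse of `e'`. -/
noncomputable def Bmat {V : Type*} [Fintype V] [DecidableEq V]
    (G : SimpleGraph V) [DecidableRel G.Adj] : Matrix G.Dart G.Dart ℂ :=
  fun e e' => if e'.snd = e.fst ∧ e'.symm ≠ e then 1 else 0

namespace IharaAux

variable {V : Type*} [Fintype V] [DecidableEq V] (G : SimpleGraph V) [DecidableRel G.Adj]
variable (zeta : V → V → ℂ) (m : V → ℂ)

/-- diagonal coefficient of the inverse of `P`. -/
noncomputable def Aent (e : G.Dart) : ℂ :=
  zeta e.fst e.snd * (2 * m e.fst * zeta e.snd e.fst)⁻¹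

/-- off-diagonal (reversal) coefficient of the inverse of `P`. -/
noncomputable def Bent (e : G.Dart) : ℂ := -(zeta e.fst e.snd * (2 * m e.fst)⁻¹)

noncomputable def Pmat : Matrix G.Dart G.Dart ℂ :=
  fun e e' => (if e' = e then (zeta e.fst e.snd)⁻¹ else 0) + (if e' = e.symm then 1 else 0)

noncomputable def Qmat : Matrix G.Dart G.Dart ℂ :=
  fun e e' => (if e' = e then Aent G zeta m e else 0)
    + (if e' = e.symm then Bent G zeta m e else 0)

noncomputable def Smat : Matrix G.Dart V ℂ := fun e v => if e.fst = v then 1 else 0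

noncomputable def Tmat : Matrix V G.Dart ℂ := fun v e => if e.snd = v then 1 else 0

section

variable {G zeta m}
variable (z : ℂ)
    (hm : ∀ v : V, m v ≠ 0)
    (hzne : ∀ v w : V, G.Adj v w → zeta v w ≠ 0)
    (h1 : ∀ v : V, z = (∑ u ∈ G.neighborFinset v, zeta v u) + 2 * m v)
    (h2 : ∀ v w : V, G.Adj v w →
      z = (∑ u ∈ (G.neighborFinset v).erase w, zeta v u) + (zeta w v)⁻¹)

include hzne h1 h2 in
theorem key : ∀ v w : V, G.Adj v w → zeta v w * zeta w v + 2 * m v * zeta w v = 1 := by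
  intro v w h
  have hw : w ∈ G.neighborFinset v := by simpa using h
  have hsplit : zeta v w + ∑ u ∈ (G.neighborFinset v).erase w, zeta v u
      = ∑ u ∈ G.neighborFinset v, zeta v u := Finset.add_sum_erase _ _ hw
  have h1' := h1 v
  have h2' := h2 v w h
  have hinv : zeta v w + 2 * m v = (zeta w v)⁻¹ := by
    have h3 := h1'.symm.trans h2'
    rw [← hsplit] at h3
    linear_combination h3
  have hne := hzne v w h
  have hne' := hzne w v h.symm
  field_simp at hinv
  linear_combination hinv

include hzne h1 h2 in
theorem swap : ∀ v w : V, G.Adj v w → 2 * m v * zeta w v = 2 * m w * zeta v w := by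
  intro v w h
  have k1 := key z hzne h1 h2 v w h
  have k2 := key z hzne h1 h2 w v h.symm
  linear_combination k1 - k2

include hm hzne h1 h2 in
theorem PQ_eq_one : Pmat G zeta * Qmat G zeta m = 1 := by
  ext e e'
  rw [mul_apply]
  simp only [Pmat, add_mul, ite_mul, zero_mul, one_mul, Finset.sum_add_distrib,
    Finset.sum_ite_eq' Finset.univ, Finset.mem_univ, if_true]
  have hsne : e.symm ≠ e := e.symm_ne
  have hfs : e.symm.fst = e.snd := rfl
  have hss : e.symm.snd = e.fst := rfl
  have ha := hzne e.fst e.snd e.adj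
  have hb := hzne e.snd e.fst e.adj.symm
  have hmx := hm e.fst
  have hmy := hm e.snd
  have k1 := key z hzne h1 h2 e.fst e.snd e.adj
  have k2 := key z hzne h1 h2 e.snd e.fst e.adj.symm
  by_cases h1' : e' = e
  · subst h1'
    simp only [Qmat, if_pos rfl, if_neg hsne, if_neg hsne.symm, SimpleGraph.Dart.symm_symm, if_pos rfl,
      Matrix.one_apply_eq, Aent, Bent, hfs, hss, add_zero, zero_add]
    simp only [if_true]
    field_simp
    linear_combination (1/2 : ℂ) * ((-(2 * m e'.toProd.2) - zeta e'.toProd.2 e'.toProd.1) * k1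
      + zeta e'.toProd.2 e'.toProd.1 * k2)
  · by_cases h2' : e' = e.symm
    · subst h2'
      simp only [Qmat, if_neg hsne, if_pos rfl, SimpleGraph.Dart.symm_symm, if_neg hsne.symm,
        Matrix.one_apply_ne (Ne.symm hsne), Aent, Bent, hfs, hss, add_zero, zero_add]
      simp only [if_true]
      field_simp
      linear_combination (1/2 : ℂ) * (k1 - k2)
    · have h3' : e' ≠ e.symm.symm := by rwa [SimpleGraph.Dart.symm_symm]
      simp only [Qmat, if_neg h1', if_neg h2', if_neg h3',
        Matrix.one_apply_ne (Ne.symm h1'), add_zero, zero_add]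
      · simp

theorem K_eq : Matrix.diagonal (fun e : G.Dart => (zeta e.fst e.snd)⁻¹) - Bmat G
    = Pmat G zeta - Smat G * Tmat G := by
  ext e e'
  rw [Matrix.sub_apply, Matrix.sub_apply, Matrix.mul_apply]
  simp only [Smat, Tmat, ite_mul, one_mul, zero_mul, Finset.sum_ite_eq Finset.univ,
    Finset.mem_univ, if_true, Pmat, Bmat]
  by_cases h1' : e' = e
  · subst h1'
    rw [Matrix.diagonal_apply_eq]
    have h2 : ¬ e'.snd = e'.fst := e'.snd_ne_fst
    rw [if_neg (by tauto), if_neg h2, if_pos rfl, if_neg (Ne.symm e'.symm_ne)]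
    ring
  · rw [Matrix.diagonal_apply_ne _ (Ne.symm h1'), if_neg h1']
    by_cases h2' : e' = e.symm
    · subst h2'
      have hs : e.symm.snd = e.fst := rfl
      have hns : ¬ e.symm.symm ≠ e := by rw [SimpleGraph.Dart.symm_symm]; tauto
      rw [if_neg (by tauto), if_pos hs, if_pos rfl]
      ring
    · have hsy : e'.symm ≠ e := fun h => h2' (by rw [← h, SimpleGraph.Dart.symm_symm])
      rw [if_neg h2']
      by_cases h3 : e'.snd = e.fst
      · rw [if_pos ⟨h3, hsy⟩, if_pos h3]; ring
      · rw [if_neg (by tauto), if_neg h3]; ring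

theorem QS_apply (e : G.Dart) (w : V) : (Qmat G zeta m * Smat G) e w
    = (if e.fst = w then Aent G zeta m e else 0)
      + (if e.snd = w then Bent G zeta m e else 0) := by
  rw [Matrix.mul_apply]
  simp only [Qmat, Smat, add_mul, ite_mul, zero_mul, Finset.sum_add_distrib,
    Finset.sum_ite_eq' Finset.univ, Finset.mem_univ, if_true]
  have hfs : e.symm.fst = e.snd := rfl
  rw [hfs]
  by_cases h1' : e.fst = w <;> by_cases h2' : e.snd = w <;>
    simp [h1', h2', mul_ite, mul_one, mul_zero]

theorem dart_sum_snd (v : V) (g : V → ℂ) :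
    ∑ e : G.Dart, (if e.snd = v then g e.fst else 0)
      = ∑ u ∈ G.neighborFinset v, g u := by
  rw [← Finset.sum_filter]
  refine Finset.sum_bij' (fun e _ => e.fst)
    (fun u hu => (⟨(u, v), ((SimpleGraph.mem_neighborFinset G v u).mp hu).symm⟩ : G.Dart))
    ?_ ?_ ?_ ?_ ?_
  · intro e he
    simp only [Finset.mem_filter, Finset.mem_univ, true_and] at he
    rw [SimpleGraph.mem_neighborFinset]
    have h := e.adj
    rw [he] at h
    exact h.symm
  · intro u hu
    simp
  · intro e he
    simp only [Finset.mem_filter, Finset.mem_univ, true_and] at he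
    apply SimpleGraph.Dart.ext
    show (e.fst, v) = e.toProd
    rw [← he]
  · intro u hu
    rfl
  · intro e he
    rfl

include hm hzne h1 h2 in
theorem TQS_eq : (1 : Matrix V V ℂ) - Tmat G * (Qmat G zeta m * Smat G)
    = Matrix.diagonal (fun v => (2 * m v)⁻¹) * (z • (1 : Matrix V V ℂ) - G.adjMatrix ℂ) := by
  ext v w
  rw [Matrix.diagonal_mul, Matrix.sub_apply, Matrix.sub_apply, Matrix.smul_apply,
    Matrix.mul_apply]
  simp only [QS_apply, Tmat, ite_mul, one_mul, zero_mul, mul_add, mul_ite, mul_zero, mul_one,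
    Finset.sum_add_distrib, smul_eq_mul, SimpleGraph.adjMatrix_apply]
  by_cases hvw : v = w
  · subst hvw
    rw [Matrix.one_apply_eq, if_neg (G.irrefl (v := v))]
    have hz1 : (∑ e : G.Dart, if e.fst = v then (if e.snd = v then Aent G zeta m e else 0)
        else 0) = 0 := by
      apply Finset.sum_eq_zero
      intro e _
      split_ifs with h h'
      · exact absurd (h.trans h'.symm) e.fst_ne_snd
      · rfl
      · rfl
    have hz2 : (∑ e : G.Dart, if e.snd = v then (if e.snd = v then Bent G zeta m e else 0)
        else 0) = ∑ u ∈ G.neighborFinset v, -(zeta v u * (2 * m v)⁻¹) := by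
      calc (∑ e : G.Dart, if e.snd = v then (if e.snd = v then Bent G zeta m e else 0) else 0)
          = ∑ e : G.Dart, (if e.snd = v then -(zeta e.fst v * (2 * m e.fst)⁻¹) else 0) := by
            apply Finset.sum_congr rfl
            intro e _
            by_cases h : e.snd = v
            · simp [Bent, h]
            · simp only [if_neg h]
        _ = ∑ u ∈ G.neighborFinset v, -(zeta u v * (2 * m u)⁻¹) :=
            dart_sum_snd v (fun u => -(zeta u v * (2 * m u)⁻¹))
        _ = ∑ u ∈ G.neighborFinset v, -(zeta v u * (2 * m v)⁻¹) := by
            apply Finset.sum_congr rfl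
            intro u hu
            have hadj : G.Adj v u := (SimpleGraph.mem_neighborFinset G v u).mp hu
            have hsw := swap z hzne h1 h2 v u hadj
            have := hm u; have := hm v
            field_simp
            linear_combination (-1/2 : ℂ) * hsw
    rw [hz1, hz2, h1 v]
    have := hm v
    have hpull : ∑ u ∈ G.neighborFinset v, -(zeta v u * (2 * m v)⁻¹)
        = -((∑ u ∈ G.neighborFinset v, zeta v u) * (2 * m v)⁻¹) := by
      rw [Finset.sum_mul, ← Finset.sum_neg_distrib]
    rw [hpull]
    field_simp
    ring
  · rw [Matrix.one_apply_ne hvw]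
    have hz2 : (∑ e : G.Dart, if e.snd = w then (if e.snd = v then Bent G zeta m e else 0)
        else 0) = 0 := by
      apply Finset.sum_eq_zero
      intro e _
      split_ifs with h h'
      · exact absurd (h'.symm.trans h) hvw
      · rfl
      · rfl
    by_cases hadj : G.Adj w v
    · have hz1 : (∑ e : G.Dart, if e.fst = w then (if e.snd = v then Aent G zeta m e else 0)
          else 0) = Aent G zeta m ⟨(w, v), hadj⟩ := by
        rw [Finset.sum_eq_single (⟨(w, v), hadj⟩ : G.Dart)]
        · rw [if_pos rfl, if_pos rfl]
        · intro e _ hne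
          split_ifs with h h'
          · refine absurd ?_ hne
            apply SimpleGraph.Dart.ext
            show e.toProd = (w, v)
            rw [← h, ← h']
          · rfl
          · rfl
        · intro h
          exact absurd (Finset.mem_univ _) h
      rw [hz1, hz2, if_pos hadj.symm, Aent]
      have hsw := swap z hzne h1 h2 w v hadj
      have := hm v; have := hm w
      have := hzne w v hadj; have := hzne v w hadj.symm
      field_simp
      linear_combination (1/2 : ℂ) * hsw
    · have hz1 : (∑ e : G.Dart, if e.fst = w then (if e.snd = v then Aent G zeta m e else 0)
          else 0) = 0 := by
        apply Finset.sum_eq_zero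
        intro e _
        split_ifs with h h'
        · refine absurd ?_ hadj
          have := e.adj
          rwa [h, h'] at this
        · rfl
        · rfl
      rw [hz1, hz2, if_neg (fun h => hadj h.symm)]
      ring

end

section DetQ

variable {G zeta m}
variable (hm : ∀ v : V, m v ≠ 0) (hzne : ∀ v w : V, G.Adj v w → zeta v w ≠ 0)

include hm hzne in
theorem Aent_ne_zero (e : G.Dart) : Aent G zeta m e ≠ 0 := by
  have h1 := hzne e.fst e.snd e.adj
  have h2 := hzne e.snd e.fst e.adj.symm
  have h3 := hm e.fst
  rw [Aent]
  exact mul_ne_zero h1 (inv_ne_zero (mul_ne_zero (mul_ne_zero two_ne_zero h3) h2))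

theorem block_det_aux (a b X Y : ℂ) (ha : a ≠ 0) (hb : b ≠ 0) (hX : X ≠ 0) (hY : Y ≠ 0) :
    (b * (2 * Y * a)⁻¹) * (a * (2 * X * b)⁻¹
      - (-(a * (2 * X)⁻¹)) * (b * (2 * Y * a)⁻¹)⁻¹ * (-(b * (2 * Y)⁻¹)))
    = (2 * X)⁻¹ * (2 * Y)⁻¹ * (1 - a * b) := by
  field_simp

include hm hzne in
theorem detQ : (Qmat G zeta m).det = ∏ ε ∈ G.edgeFinset,
    Sym2.lift ⟨fun x y => (2 * m x)⁻¹ * (2 * m y)⁻¹ * (1 - zeta x y * zeta y x),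
      by intro a b; ring⟩ ε := by
  classical
  set r := Fintype.equivFin V with hr
  have horient : ∀ e : G.Dart, r e.fst ≠ r e.snd := fun e h => e.fst_ne_snd (r.injective h)
  let φ : {e : G.Dart // r e.fst < r e.snd} ⊕ {e : G.Dart // r e.fst < r e.snd} ≃ G.Dart :=
  { toFun := fun x => Sum.elim (fun d => d.1) (fun d => d.1.symm) x
    invFun := fun e => if h : r e.fst < r e.snd then Sum.inl ⟨e, h⟩ else
      Sum.inr ⟨e.symm, lt_of_le_of_ne (not_lt.mp h) (horient e).symm⟩
    left_inv := by
      rintro (d | d) <;> dsimp only [Sum.elim_inl, Sum.elim_inr]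
      · rw [dif_pos d.2]
      · have hc : ¬ (r (d.1.symm.toProd.1) < r (d.1.symm.toProd.2)) := not_lt.mpr d.2.le
        rw [dif_neg hc]
        exact congrArg Sum.inr (Subtype.ext d.1.symm_symm)
    right_inv := by
      intro e
      dsimp only
      by_cases h : r e.toProd.1 < r e.toProd.2
      · rw [dif_pos h]
        rfl
      · rw [dif_neg h]
        exact SimpleGraph.Dart.symm_symm e }
  rw [← Matrix.det_submatrix_equiv_self φ (Qmat G zeta m)]
  have hb : ∀ d d' : {e : G.Dart // r e.fst < r e.snd}, d'.1 ≠ d.1.symm := by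
    intro d d' h
    have h2 : r d'.1.fst < r d'.1.snd := d'.2
    rw [h] at h2
    exact absurd d.2 (not_lt.mpr (le_of_lt h2))
  have hblock : (Qmat G zeta m).submatrix φ φ = Matrix.fromBlocks
      (Matrix.diagonal fun d : {e : G.Dart // r e.fst < r e.snd} => Aent G zeta m d.1)
      (Matrix.diagonal fun d : {e : G.Dart // r e.fst < r e.snd} => Bent G zeta m d.1)
      (Matrix.diagonal fun d : {e : G.Dart // r e.fst < r e.snd} => Bent G zeta m d.1.symm)
      (Matrix.diagonal fun d : {e : G.Dart // r e.fst < r e.snd} => Aent G zeta m d.1.symm)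
      := by
    ext i j
    rcases i with d | d <;> rcases j with d' | d'
    · show Qmat G zeta m d.1 d'.1 = _
      simp only [Qmat, Matrix.fromBlocks_apply₁₁, Matrix.diagonal_apply]
      rw [if_neg (hb d d'), add_zero]
      by_cases h : d = d'
      · subst h; rw [if_pos rfl, if_pos rfl]
      · rw [if_neg (fun hh : d'.1 = d.1 => h (Subtype.ext hh).symm), if_neg h]
    · show Qmat G zeta m d.1 d'.1.symm = _
      simp only [Qmat, Matrix.fromBlocks_apply₁₂, Matrix.diagonal_apply]
      have h1 : d'.1.symm ≠ d.1 := fun h => hb d' d h.symm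
      rw [if_neg h1, zero_add]
      by_cases h : d = d'
      · subst h; rw [if_pos rfl, if_pos rfl]
      · have h2 : d'.1.symm ≠ d.1.symm := fun hh =>
          h (Subtype.ext ((SimpleGraph.Dart.symm_involutive.injective) hh)).symm
        rw [if_neg h2, if_neg h]
    · show Qmat G zeta m d.1.symm d'.1 = _
      simp only [Qmat, Matrix.fromBlocks_apply₂₁, Matrix.diagonal_apply]
      have hss : d.1.symm.symm = d.1 := SimpleGraph.Dart.symm_symm _
      rw [if_neg (hb d d'), hss, zero_add]
      by_cases h : d = d'
      · subst h; rw [if_pos rfl, if_pos rfl]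
      · rw [if_neg (fun hh : d'.1 = d.1 => h (Subtype.ext hh).symm), if_neg h]
    · show Qmat G zeta m d.1.symm d'.1.symm = _
      simp only [Qmat, Matrix.fromBlocks_apply₂₂, Matrix.diagonal_apply]
      have hss : d.1.symm.symm = d.1 := SimpleGraph.Dart.symm_symm _
      rw [hss]
      have h1 : d'.1.symm ≠ d.1 := fun h => hb d' d h.symm
      rw [if_neg h1, add_zero]
      by_cases h : d = d'
      · subst h; rw [if_pos rfl, if_pos rfl]
      · have h2 : d'.1.symm ≠ d.1.symm := fun hh =>
          h (Subtype.ext ((SimpleGraph.Dart.symm_involutive.injective) hh)).symm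
        rw [if_neg h2, if_neg h]
  rw [hblock]
  have hone : (fun i : {e : G.Dart // r e.fst < r e.snd} =>
      (Aent G zeta m i.1.symm)⁻¹ * Aent G zeta m i.1.symm) = fun _ => (1 : ℂ) :=
    funext fun i => inv_mul_cancel₀ (Aent_ne_zero hm hzne _)
  have hone' : (fun i : {e : G.Dart // r e.fst < r e.snd} =>
      Aent G zeta m i.1.symm * (Aent G zeta m i.1.symm)⁻¹) = fun _ => (1 : ℂ) :=
    funext fun i => mul_inv_cancel₀ (Aent_ne_zero hm hzne _)
  haveI hinvD : Invertible (Matrix.diagonal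
      fun d : {e : G.Dart // r e.fst < r e.snd} => Aent G zeta m d.1.symm) :=
    ⟨Matrix.diagonal fun d => (Aent G zeta m d.1.symm)⁻¹,
      by rw [Matrix.diagonal_mul_diagonal, hone]; exact Matrix.diagonal_one,
      by rw [Matrix.diagonal_mul_diagonal, hone']; exact Matrix.diagonal_one⟩
  have hinvOf : ⅟(Matrix.diagonal
      fun d : {e : G.Dart // r e.fst < r e.snd} => Aent G zeta m d.1.symm)
      = Matrix.diagonal fun d => (Aent G zeta m d.1.symm)⁻¹ :=
    invOf_eq_right_inv
      (by rw [Matrix.diagonal_mul_diagonal, hone']; exact Matrix.diagonal_one)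
  rw [Matrix.det_fromBlocks₂₂, hinvOf, Matrix.diagonal_mul_diagonal,
    Matrix.diagonal_mul_diagonal, Matrix.diagonal_sub, Matrix.det_diagonal,
    Matrix.det_diagonal, ← Finset.prod_mul_distrib]
  apply Finset.prod_bij
    (fun (d : {e : G.Dart // r e.fst < r e.snd}) (_ : d ∈ Finset.univ) => d.1.edge)
  · intro d _
    exact SimpleGraph.mem_edgeFinset.mpr d.1.edge_mem
  · intro d1 _ d2 _ h
    rcases (SimpleGraph.dart_edge_eq_iff d1.1 d2.1).mp h with h' | h'
    · exact Subtype.ext h'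
    · exfalso
      have h2 := d1.2
      rw [h'] at h2
      exact absurd d2.2 (not_lt.mpr (le_of_lt h2))
  · intro ε hε
    induction ε using Sym2.ind with
    | _ x y =>
      have hadj : G.Adj x y := SimpleGraph.mem_edgeFinset.mp hε
      rcases lt_or_gt_of_ne (show r x ≠ r y from fun h => hadj.ne (r.injective h)) with h | h
      · exact ⟨⟨⟨(x, y), hadj⟩, h⟩, Finset.mem_univ _, rfl⟩
      · exact ⟨⟨⟨(y, x), hadj.symm⟩, h⟩, Finset.mem_univ _, Sym2.eq_swap⟩
  · intro d _
    have heq : Sym2.lift ⟨fun x y => (2 * m x)⁻¹ * (2 * m y)⁻¹ * (1 - zeta x y * zeta y x),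
        by intro a b; ring⟩ d.1.edge
        = (2 * m d.1.fst)⁻¹ * (2 * m d.1.snd)⁻¹
          * (1 - zeta d.1.fst d.1.snd * zeta d.1.snd d.1.fst) := rfl
    rw [heq]
    simp only [Pi.sub_apply, Aent, Bent, SimpleGraph.Dart.symm_toProd, Prod.fst_swap,
      Prod.snd_swap]
    have hax := hzne d.1.fst d.1.snd d.1.adj
    have hbx := hzne d.1.snd d.1.fst d.1.adj.symm
    have hmx := hm d.1.fst
    have hmy := hm d.1.snd
    exact block_det_aux _ _ _ _ hax hbx hmx hmy

end DetQ

end IharaAux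

/-- Theorem 3, non-regular Ihara-type determinant formula:
`∏_{e∈E}(-G^z(e)) · det((ζ^z)⁻¹ I - B) = det(zI - A) · ∏_{x∈V}(-G^z(x))`,
for any weights `ζ^z, m^z` satisfying the algebraic system of the Green
functions of the universal covering tree, where `G^z(x) = -1/(2m^z(x))` and,
for an edge `{x,y}`, `-G^z(x,y) = (2m(x))⁻¹(2m(y))⁻¹(1 - ζ(x,y)ζ(y,x))`. -/
theorem ihara_type_determinant {V : Type*} [Fintype V] [DecidableEq V]
    (G : SimpleGraph V) [DecidableRel G.Adj]
    (hdeg : ∀ x : V, 2 ≤ G.degree x)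
    (z : ℂ) (hz : z.im ≠ 0)
    (zeta : V → V → ℂ) (m : V → ℂ)
    (hm : ∀ v : V, m v ≠ 0)
    (hzne : ∀ v w : V, G.Adj v w → zeta v w ≠ 0)
    (h1 : ∀ v : V, z = (∑ u ∈ G.neighborFinset v, zeta v u) + 2 * m v)
    (h2 : ∀ v w : V, G.Adj v w →
      z = (∑ u ∈ (G.neighborFinset v).erase w, zeta v u) + (zeta w v)⁻¹) :
    (∏ ε ∈ G.edgeFinset,
        Sym2.lift ⟨fun x y => (2 * m x)⁻¹ * (2 * m y)⁻¹ * (1 - zeta x y * zeta y x),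
          by intro a b; ring⟩ ε) *
      (Matrix.diagonal (fun e : G.Dart => (zeta e.fst e.snd)⁻¹) - Bmat G).det =
    (z • (1 : Matrix V V ℂ) - G.adjMatrix ℂ).det * ∏ x : V, (2 * m x)⁻¹ := by
  classical
  have hPQ := IharaAux.PQ_eq_one (z := z) (hm := hm) (hzne := hzne) (h1 := h1) (h2 := h2)
  have hK : (Matrix.diagonal (fun e : G.Dart => (zeta e.fst e.snd)⁻¹) - Bmat G)
        * IharaAux.Qmat G zeta m
      = 1 - IharaAux.Smat G * (IharaAux.Tmat G * IharaAux.Qmat G zeta m) := by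
    rw [IharaAux.K_eq, Matrix.sub_mul, hPQ, Matrix.mul_assoc]
  have hdet1 : (Matrix.diagonal (fun e : G.Dart => (zeta e.fst e.snd)⁻¹) - Bmat G).det
        * (IharaAux.Qmat G zeta m).det
      = (∏ v : V, (2 * m v)⁻¹) * (z • (1 : Matrix V V ℂ) - G.adjMatrix ℂ).det := by
    rw [← Matrix.det_mul, hK, sub_eq_add_neg, ← Matrix.mul_neg,
      Matrix.det_one_add_mul_comm, Matrix.neg_mul, ← sub_eq_add_neg, Matrix.mul_assoc,
      IharaAux.TQS_eq (z := z) (hm := hm) (hzne := hzne) (h1 := h1) (h2 := h2),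
      Matrix.det_mul, Matrix.det_diagonal]
  rw [← IharaAux.detQ (hm := hm) (hzne := hzne), mul_comm, hdet1]
  ring
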